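/- Fix κ > 0 and α_min > 0, and let Q* : S × A → ℝ be a fixed point of the Bellman optimality operator, T Q* = Q*. Let Q_{t+1}^{(i)} = T_{α_t} Q_t^{(i)} for i ∈ {1,2} be coupled iterates driven by the shared disagreement-scaled temperature α_t(s) = max{α_min, (max_{a∈A} |Q_t^{(1)}(s,a) − Q_t^{(2)}(s,a)|)/κ}, let Δ_0 = ‖Q_0^{(1)} − Q_0^{(2)}‖∞, and let e_t^{(i)} = ‖Q_t^{(i)} − Q*‖∞. Then for each i ∈ {1,2} and all t ≥ 0, e_{t+1}^{(i)} ≤ γ · e_t^{(i)} + γ · log|A| · (α_min + γ^t · Δ_0 / κ). -/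

import Mathlib

open Finset Real

/-- The soft Bellman operator at temperature function `α`:
`(T_α Q)(s,a) = r(s,a) + γ·∑_{s'} P(s'|s,a)·α(s')·log(∑_{a'} exp(Q(s',a')/α(s')))`. -/
noncomputable def softBellman {S A : Type*} [Fintype S] [Fintype A]
    (r : S → A → ℝ) (γ : ℝ) (P : S → A → S → ℝ) (α : S → ℝ)
    (Q : S → A → ℝ) (s : S) (a : A) : ℝ :=
  r s a + γ * ∑ s', P s a s' * (α s' * Real.log (∑ a', Real.exp (Q s' a' / α s')))

/-- The Bellman optimality operator:
`(T Q)(s,a) = r(s,a) + γ·∑_{s'} P(s'|s,a)·max_{a'} Q(s',a')`. -/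
noncomputable def hardBellman {S A : Type*} [Fintype S] [Fintype A] [Nonempty A]
    (r : S → A → ℝ) (γ : ℝ) (P : S → A → S → ℝ)
    (Q : S → A → ℝ) (s : S) (a : A) : ℝ :=
  r s a + γ * ∑ s', P s a s' * Finset.univ.sup' Finset.univ_nonempty (Q s')

/-- Sup norm on `S × A → ℝ`: `‖F‖∞ = max_{(s,a)} |F(s,a)|`. -/
noncomputable def supNorm {S A : Type*} [Fintype S] [Fintype A] [Nonempty S] [Nonempty A]
    (Q : S → A → ℝ) : ℝ :=
  Finset.univ.sup' Finset.univ_nonempty (fun p : S × A => |Q p.1 p.2|)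


section helpers
variable {A : Type*} [Fintype A] [Nonempty A]

lemma sup'_abs_nonneg (f : A → ℝ) :
    0 ≤ Finset.univ.sup' Finset.univ_nonempty (fun a => |f a|) := by
  obtain ⟨a⟩ := ‹Nonempty A›
  exact le_trans (abs_nonneg (f a)) (Finset.le_sup' (fun a => |f a|) (Finset.mem_univ a))

lemma lse_ge (α : ℝ) (hα : 0 < α) (Q : A → ℝ) :
    Finset.univ.sup' Finset.univ_nonempty Q ≤ α * Real.log (∑ a, Real.exp (Q a / α)) := by
  obtain ⟨a0, -, ha0⟩ := Finset.exists_mem_eq_sup' Finset.univ_nonempty Q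
  rw [ha0]
  have h1 : Real.exp (Q a0 / α) ≤ ∑ a, Real.exp (Q a / α) :=
    Finset.single_le_sum (f := fun a => Real.exp (Q a / α)) (fun a _ => (Real.exp_pos _).le) (Finset.mem_univ a0)
  have h2 : Q a0 / α ≤ Real.log (∑ a, Real.exp (Q a / α)) := by
    rw [← Real.log_exp (Q a0 / α)]
    exact Real.log_le_log (Real.exp_pos _) h1
  have := mul_le_mul_of_nonneg_left h2 hα.le
  rw [mul_div_cancel₀ _ (ne_of_gt hα)] at this
  exact this

lemma lse_le (α : ℝ) (hα : 0 < α) (Q : A → ℝ) :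
    α * Real.log (∑ a, Real.exp (Q a / α)) ≤
      Finset.univ.sup' Finset.univ_nonempty Q + α * Real.log (Fintype.card A) := by
  set M := Finset.univ.sup' Finset.univ_nonempty Q with hM
  have hsum_le : (∑ a, Real.exp (Q a / α)) ≤ (Fintype.card A : ℝ) * Real.exp (M / α) := by
    calc (∑ a, Real.exp (Q a / α)) ≤ ∑ _a : A, Real.exp (M / α) := by
          apply Finset.sum_le_sum
          intro a _
          apply Real.exp_le_exp.2
          gcongr
          exact Finset.le_sup' _ (Finset.mem_univ a)
      _ = (Fintype.card A : ℝ) * Real.exp (M / α) := by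
          rw [Finset.sum_const, Finset.card_univ, nsmul_eq_mul]
  have hpos : (0:ℝ) < ∑ a, Real.exp (Q a / α) :=
    Finset.sum_pos (fun a _ => Real.exp_pos _) Finset.univ_nonempty
  have h2 := Real.log_le_log hpos hsum_le
  rw [Real.log_mul (Nat.cast_ne_zero.2 Fintype.card_ne_zero) (Real.exp_ne_zero _),
    Real.log_exp] at h2
  have h3 := mul_le_mul_of_nonneg_left h2 hα.le
  rw [mul_add, mul_div_cancel₀ _ (ne_of_gt hα)] at h3
  linarith

lemma lse_lip_le (α : ℝ) (hα : 0 < α) (Q1 Q2 : A → ℝ) :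
    α * Real.log (∑ a, Real.exp (Q1 a / α)) ≤
      α * Real.log (∑ a, Real.exp (Q2 a / α)) +
        Finset.univ.sup' Finset.univ_nonempty (fun a => |Q1 a - Q2 a|) := by
  set D := Finset.univ.sup' Finset.univ_nonempty (fun a => |Q1 a - Q2 a|) with hD
  have hQ : ∀ a, Q1 a ≤ Q2 a + D := by
    intro a
    have h1 : Q1 a - Q2 a ≤ |Q1 a - Q2 a| := le_abs_self _
    have h2 : |Q1 a - Q2 a| ≤ D := Finset.le_sup' (fun a => |Q1 a - Q2 a|) (Finset.mem_univ a)
    linarith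
  have hsum : (∑ a, Real.exp (Q1 a / α)) ≤ Real.exp (D / α) * ∑ a, Real.exp (Q2 a / α) := by
    rw [Finset.mul_sum]
    apply Finset.sum_le_sum
    intro a _
    rw [← Real.exp_add]
    apply Real.exp_le_exp.2
    rw [← add_div]
    gcongr
    linarith [hQ a]
  have hpos1 : (0:ℝ) < ∑ a, Real.exp (Q1 a / α) :=
    Finset.sum_pos (fun a _ => Real.exp_pos _) Finset.univ_nonempty
  have hpos2 : (0:ℝ) < ∑ a, Real.exp (Q2 a / α) :=
    Finset.sum_pos (fun a _ => Real.exp_pos _) Finset.univ_nonempty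
  have h2 := Real.log_le_log hpos1 hsum
  rw [Real.log_mul (Real.exp_ne_zero _) (ne_of_gt hpos2), Real.log_exp] at h2
  have h3 := mul_le_mul_of_nonneg_left h2 hα.le
  rw [mul_add, mul_div_cancel₀ _ (ne_of_gt hα)] at h3
  linarith

lemma lse_lip (α : ℝ) (hα : 0 < α) (Q1 Q2 : A → ℝ) :
    |α * Real.log (∑ a, Real.exp (Q1 a / α)) - α * Real.log (∑ a, Real.exp (Q2 a / α))| ≤
      Finset.univ.sup' Finset.univ_nonempty (fun a => |Q1 a - Q2 a|) := by
  rw [abs_sub_le_iff]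
  constructor
  · linarith [lse_lip_le α hα Q1 Q2]
  · have := lse_lip_le α hα Q2 Q1
    simp only [abs_sub_comm] at this
    linarith

lemma sup'_lip (Q1 Q2 : A → ℝ) :
    |Finset.univ.sup' Finset.univ_nonempty Q1 - Finset.univ.sup' Finset.univ_nonempty Q2| ≤
      Finset.univ.sup' Finset.univ_nonempty (fun a => |Q1 a - Q2 a|) := by
  rw [abs_sub_le_iff]
  constructor
  · rw [sub_le_iff_le_add]
    apply Finset.sup'_le
    intro a _
    have h1 : Q1 a - Q2 a ≤ |Q1 a - Q2 a| := le_abs_self _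
    have h2 : |Q1 a - Q2 a| ≤ _ := Finset.le_sup' (fun a => |Q1 a - Q2 a|) (Finset.mem_univ a)
    have h3 : Q2 a ≤ _ := Finset.le_sup' Q2 (Finset.mem_univ a)
    linarith
  · rw [sub_le_iff_le_add]
    apply Finset.sup'_le
    intro a _
    have h1 : Q2 a - Q1 a ≤ |Q1 a - Q2 a| := by rw [abs_sub_comm]; exact le_abs_self _
    have h2 : |Q1 a - Q2 a| ≤ _ := Finset.le_sup' (fun a => |Q1 a - Q2 a|) (Finset.mem_univ a)
    have h3 : Q1 a ≤ _ := Finset.le_sup' Q1 (Finset.mem_univ a)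
    linarith

end helpers

section sums
variable {S : Type*} [Fintype S]

lemma sum_P_abs_le (P : S → ℝ) (hP : ∀ s, 0 ≤ P s) (hP1 : ∑ s, P s = 1)
    (f : S → ℝ) (c : ℝ) (hf : ∀ s, |f s| ≤ c) : |∑ s, P s * f s| ≤ c := by
  calc |∑ s, P s * f s| ≤ ∑ s, |P s * f s| := Finset.abs_sum_le_sum_abs _ _
    _ = ∑ s, P s * |f s| := by
        apply Finset.sum_congr rfl; intro s _; rw [abs_mul, abs_of_nonneg (hP s)]
    _ ≤ ∑ s, P s * c := Finset.sum_le_sum (fun s _ => mul_le_mul_of_nonneg_left (hf s) (hP s))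
    _ = c := by rw [← Finset.sum_mul, hP1, one_mul]
end sums

section supnormlemmas
variable {S A : Type*} [Fintype S] [Fintype A] [Nonempty S] [Nonempty A]

lemma supNorm_nonneg (Q : S → A → ℝ) : 0 ≤ supNorm Q := by
  obtain ⟨s⟩ := ‹Nonempty S›
  obtain ⟨a⟩ := ‹Nonempty A›
  exact le_trans (abs_nonneg (Q s a))
    (Finset.le_sup' (fun p : S × A => |Q p.1 p.2|) (Finset.mem_univ (s, a)))

lemma abs_le_supNorm (Q : S → A → ℝ) (s : S) (a : A) : |Q s a| ≤ supNorm Q :=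
  Finset.le_sup' (fun p : S × A => |Q p.1 p.2|) (Finset.mem_univ (s, a))

lemma supNorm_le (Q : S → A → ℝ) (c : ℝ) (h : ∀ s a, |Q s a| ≤ c) : supNorm Q ≤ c :=
  Finset.sup'_le _ _ (fun p _ => h p.1 p.2)

end supnormlemmas

/-- One-step error recursion for coupled soft value iteration with
disagreement-scaled temperature: with `e_t⁽ⁱ⁾ = ‖Q_t⁽ⁱ⁾ − Q*‖∞` and
`Δ_0 = ‖Q_0¹ − Q_0²‖∞`, one has
`e_{t+1}⁽ⁱ⁾ ≤ γ·e_t⁽ⁱ⁾ + γ·log|A|·(α_min + γ^t·Δ_0/κ)`. -/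
theorem error_recursion {S A : Type*}
    [Fintype S] [Fintype A] [Nonempty S] [Nonempty A]
    (r : S → A → ℝ) (γ : ℝ) (hγ0 : 0 < γ) (hγ1 : γ < 1)
    (P : S → A → S → ℝ) (hP : ∀ s a s', 0 ≤ P s a s')
    (hP1 : ∀ s a, ∑ s', P s a s' = 1)
    (κ αmin : ℝ) (hκ : 0 < κ) (hαmin : 0 < αmin)
    (Qstar : S → A → ℝ) (hQstar : hardBellman r γ P Qstar = Qstar)
    (Q1 Q2 : ℕ → S → A → ℝ)
    (αseq : ℕ → S → ℝ)
    (hαseq : ∀ t s, αseq t s =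
      max αmin ((Finset.univ.sup' Finset.univ_nonempty fun a => |Q1 t s a - Q2 t s a|) / κ))
    (hQ1 : ∀ t, Q1 (t + 1) = softBellman r γ P (αseq t) (Q1 t))
    (hQ2 : ∀ t, Q2 (t + 1) = softBellman r γ P (αseq t) (Q2 t)) :
    ∀ (Qi : ℕ → S → A → ℝ), (Qi = Q1 ∨ Qi = Q2) → ∀ t,
      supNorm (fun s a => Qi (t + 1) s a - Qstar s a) ≤
        γ * supNorm (fun s a => Qi t s a - Qstar s a) +
          γ * Real.log (Fintype.card A) *
            (αmin + γ ^ t * supNorm (fun s a => Q1 0 s a - Q2 0 s a) / κ) := by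

  have hQs : ∀ s a, Qstar s a =
      r s a + γ * ∑ s', P s a s' * Finset.univ.sup' Finset.univ_nonempty (Qstar s') := by
    intro s a
    conv_lhs => rw [← hQstar]
    rfl
  have hα_pos : ∀ t s, 0 < αseq t s := by
    intro t s
    rw [hαseq t s]
    exact lt_of_lt_of_le hαmin (le_max_left _ _)
  have hDle : ∀ t s, (Finset.univ.sup' Finset.univ_nonempty fun a => |Q1 t s a - Q2 t s a|)
      ≤ supNorm (fun s a => Q1 t s a - Q2 t s a) := by
    intro t s
    apply Finset.sup'_le
    intro a _
    exact abs_le_supNorm (fun s a => Q1 t s a - Q2 t s a) s a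
  have hΔstep : ∀ t, supNorm (fun s a => Q1 (t + 1) s a - Q2 (t + 1) s a) ≤
      γ * supNorm (fun s a => Q1 t s a - Q2 t s a) := by
    intro t
    apply supNorm_le
    intro s a
    have hdiff : Q1 (t + 1) s a - Q2 (t + 1) s a =
        γ * ∑ s', P s a s' *
          (αseq t s' * Real.log (∑ a', Real.exp (Q1 t s' a' / αseq t s'))
            - αseq t s' * Real.log (∑ a', Real.exp (Q2 t s' a' / αseq t s'))) := by
      rw [hQ1 t, hQ2 t]
      simp only [softBellman, mul_sub, Finset.sum_sub_distrib]
      ring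
    rw [hdiff, abs_mul, abs_of_pos hγ0]
    apply mul_le_mul_of_nonneg_left _ hγ0.le
    apply sum_P_abs_le (P s a) (hP s a) (hP1 s a)
    intro s'
    exact le_trans (lse_lip _ (hα_pos t s') _ _) (hDle t s')
  have hΔt : ∀ t, supNorm (fun s a => Q1 t s a - Q2 t s a) ≤
      γ ^ t * supNorm (fun s a => Q1 0 s a - Q2 0 s a) := by
    intro t
    induction t with
    | zero => simp
    | succ t ih =>
      calc supNorm (fun s a => Q1 (t + 1) s a - Q2 (t + 1) s a)
          ≤ γ * supNorm (fun s a => Q1 t s a - Q2 t s a) := hΔstep t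
        _ ≤ γ * (γ ^ t * supNorm (fun s a => Q1 0 s a - Q2 0 s a)) :=
            mul_le_mul_of_nonneg_left ih hγ0.le
        _ = γ ^ (t + 1) * supNorm (fun s a => Q1 0 s a - Q2 0 s a) := by ring
  have hΔ0nn : 0 ≤ supNorm (fun s a => Q1 0 s a - Q2 0 s a) := supNorm_nonneg _
  have hB : ∀ t s, αseq t s ≤
      αmin + γ ^ t * supNorm (fun s a => Q1 0 s a - Q2 0 s a) / κ := by
    intro t s
    rw [hαseq t s]
    apply max_le
    · have h0 : 0 ≤ γ ^ t * supNorm (fun s a => Q1 0 s a - Q2 0 s a) / κ := by positivity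
      linarith
    · have h1 := le_trans (hDle t s) (hΔt t)
      have h2 : (Finset.univ.sup' Finset.univ_nonempty fun a => |Q1 t s a - Q2 t s a|) / κ
          ≤ γ ^ t * supNorm (fun s a => Q1 0 s a - Q2 0 s a) / κ := by gcongr
      linarith
  intro Qi hQi t
  have hQistep : Qi (t + 1) = softBellman r γ P (αseq t) (Qi t) := by
    rcases hQi with h | h <;> subst h
    · exact hQ1 t
    · exact hQ2 t
  set B := αmin + γ ^ t * supNorm (fun s a => Q1 0 s a - Q2 0 s a) / κ with hBdef
  set e := supNorm (fun s a => Qi t s a - Qstar s a) with he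
  have hlogA : 0 ≤ Real.log (Fintype.card A) :=
    Real.log_nonneg (by exact_mod_cast Fintype.card_pos)
  have key : supNorm (fun s a => Qi (t + 1) s a - Qstar s a) ≤
      γ * (e + Real.log (Fintype.card A) * B) := by
    apply supNorm_le
    intro s a
    have hdiff : Qi (t + 1) s a - Qstar s a =
        γ * ∑ s', P s a s' *
          (αseq t s' * Real.log (∑ a', Real.exp (Qi t s' a' / αseq t s'))
            - Finset.univ.sup' Finset.univ_nonempty (Qstar s')) := by
      rw [hQistep]
      simp only [softBellman]
      rw [hQs s a]
      simp only [mul_sub, Finset.sum_sub_distrib]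
      ring
    rw [hdiff, abs_mul, abs_of_pos hγ0]
    apply mul_le_mul_of_nonneg_left _ hγ0.le
    apply sum_P_abs_le (P s a) (hP s a) (hP1 s a)
    intro s'
    have hg := lse_ge (αseq t s') (hα_pos t s') (Qi t s')
    have hl := lse_le (αseq t s') (hα_pos t s') (Qi t s')
    have hnn : 0 ≤ αseq t s' * Real.log (Fintype.card A) :=
      mul_nonneg (hα_pos t s').le hlogA
    have h1 : |αseq t s' * Real.log (∑ a', Real.exp (Qi t s' a' / αseq t s'))
        - Finset.univ.sup' Finset.univ_nonempty (Qi t s')| ≤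
        αseq t s' * Real.log (Fintype.card A) := by
      rw [abs_sub_le_iff]
      constructor <;> linarith
    have h2 : |Finset.univ.sup' Finset.univ_nonempty (Qi t s')
        - Finset.univ.sup' Finset.univ_nonempty (Qstar s')| ≤ e := by
      refine le_trans (sup'_lip _ _) ?_
      apply Finset.sup'_le
      intro a' _
      exact abs_le_supNorm (fun s a => Qi t s a - Qstar s a) s' a'
    have h3 : αseq t s' * Real.log (Fintype.card A) ≤ B * Real.log (Fintype.card A) :=
      mul_le_mul_of_nonneg_right (hB t s') hlogA
    have hcomm : B * Real.log (Fintype.card A) = Real.log (Fintype.card A) * B :=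
      mul_comm _ _
    calc |αseq t s' * Real.log (∑ a', Real.exp (Qi t s' a' / αseq t s'))
          - Finset.univ.sup' Finset.univ_nonempty (Qstar s')|
        ≤ |αseq t s' * Real.log (∑ a', Real.exp (Qi t s' a' / αseq t s'))
            - Finset.univ.sup' Finset.univ_nonempty (Qi t s')|
          + |Finset.univ.sup' Finset.univ_nonempty (Qi t s')
            - Finset.univ.sup' Finset.univ_nonempty (Qstar s')| := abs_sub_le _ _ _
      _ ≤ αseq t s' * Real.log (Fintype.card A) + e := add_le_add h1 h2
      _ ≤ B * Real.log (Fintype.card A) + e := by linarith [h3]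
      _ = e + Real.log (Fintype.card A) * B := by ring
  refine le_trans key (le_of_eq (by ring))
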